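/- Let G be a finite group, Γ = Pow(G), and let v ∈ G be such that the order o(v) is not a prime power. Suppose x ∈ N_Γ[v] has o(x) > o(v) and x is a closed-twin of v in Γ_v = Γ[N_Γ[v]]. Then the degree of x in Γ is strictly greater than the degree of v in Γ. -/

import Mathlib

/-- The power graph of a group `G`: distinct `x` and `y` are adjacent iff
`x ∈ ⟨y⟩` or `y ∈ ⟨x⟩`. -/
def powGraph (G : Type*) [Group G] : SimpleGraph G where
  Adj x y := x ≠ y ∧ (x ∈ Subgroup.zpowers y ∨ y ∈ Subgroup.zpowers x)
  symm := by
    constructor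
    rintro x y ⟨hne, h⟩
    exact ⟨hne.symm, h.symm⟩
  loopless := by
    constructor
    rintro x ⟨hne, -⟩
    exact hne rfl

/-- The closed neighborhood of a vertex in a simple graph. -/
def closedNbhd {V : Type*} (X : SimpleGraph V) (v : V) : Set V :=
  insert v (X.neighborSet v)

theorem self_mem_closedNbhd {V : Type*} (X : SimpleGraph V) (v : V) :
    v ∈ closedNbhd X v := Set.mem_insert v _

/-- `Γ_v`: the subgraph of the power graph induced on the closed neighborhood of `v`. -/
def powLocal (G : Type*) [Group G] (v : G) :
    SimpleGraph (closedNbhd (powGraph G) v) :=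
  SimpleGraph.induce (closedNbhd (powGraph G) v) (powGraph G)

/-- If `o(v)` is not a prime power, `x ∈ N_Γ[v]` has strictly larger order than `v`,
and `x` is a closed-twin of `v` in `Γ_v`, then `deg_Γ(x) > deg_Γ(v)`. -/
theorem twin_of_larger_order_has_larger_degree
    {G : Type*} [Group G] [Finite G] (v x : G)
    (hnpp : ¬ ∃ p i : ℕ, p.Prime ∧ orderOf v = p ^ i)
    (hx : x ∈ closedNbhd (powGraph G) v)
    (hord : orderOf v < orderOf x)
    (htwin : closedNbhd (powLocal G v) ⟨x, hx⟩ =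
      closedNbhd (powLocal G v) ⟨v, self_mem_closedNbhd _ v⟩) :
    ((powGraph G).neighborSet v).ncard < ((powGraph G).neighborSet x).ncard := by
  classical
  set m := orderOf v with hm
  set n := orderOf x with hn
  have hmpos : 0 < m := orderOf_pos v
  have hnpos : 0 < n := orderOf_pos x
  have hxv : x ≠ v := by rintro rfl; exact lt_irrefl _ hord
  have hadj : (powGraph G).Adj v x := by
    rcases hx with h | h
    · exact absurd h hxv
    · exact h
  have hvx : v ∈ Subgroup.zpowers x := by
    rcases hadj.2 with h | h
    · exact h
    · exact absurd (orderOf_dvd_of_mem_zpowers h) (Nat.not_dvd_of_pos_of_lt hmpos hord)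
  have hmdvd : m ∣ n := orderOf_dvd_of_mem_zpowers hvx
  -- pick a prime p dividing n/m
  set k := n / m with hkdef
  have hk : m * k = n := Nat.mul_div_cancel' hmdvd
  have hk1 : k ≠ 1 := by rintro h; rw [h, mul_one] at hk; omega
  have hkpos : 0 < k := Nat.pos_of_ne_zero (by rintro h; rw [h, mul_zero] at hk; omega)
  set p := k.minFac with hpdef
  have hp : p.Prime := Nat.minFac_prime hk1
  have hpk : p ∣ k := Nat.minFac_dvd k
  set a := m.factorization p with hadef
  set d := p ^ (a + 1) with hddef
  have hdn : d ∣ n := by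
    have h1 : p ^ a ∣ m := Nat.ordProj_dvd m p
    calc d = p ^ a * p := by rw [hddef, pow_succ]
    _ ∣ m * k := mul_dvd_mul h1 hpk
    _ = n := hk
  have hdm : ¬ d ∣ m := Nat.pow_succ_factorization_not_dvd hmpos.ne' hp
  set y := x ^ (n / d) with hydef
  have hoy : orderOf y = d := by
    rw [hydef, orderOf_pow, ← hn, Nat.gcd_eq_right (Nat.div_dvd_of_dvd hdn),
      Nat.div_div_self hdn hnpos.ne']
  have hyzx : y ∈ Subgroup.zpowers x := by
    rw [hydef]; exact Subgroup.npow_mem_zpowers x (n / d)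
  clear_value y
  have hvny : v ∉ Subgroup.zpowers y := by
    intro h
    have hmd : m ∣ d := by
      have := orderOf_dvd_of_mem_zpowers h
      rwa [hoy, ← hm] at this
    obtain ⟨j, _, hj⟩ := (Nat.dvd_prime_pow hp).mp hmd
    exact hnpp ⟨p, j, hp, hj⟩
  have hynv : y ∉ Subgroup.zpowers v := by
    intro h
    have := orderOf_dvd_of_mem_zpowers h
    rw [hoy, ← hm] at this
    exact hdm this
  have hyv : y ≠ v := by rintro rfl; exact hvny (Subgroup.mem_zpowers y)
  have hyx : y ≠ x := by rintro rfl; exact hvny hvx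
  have hyNx : y ∈ (powGraph G).neighborSet x := ⟨Ne.symm hyx, Or.inr hyzx⟩
  have hyNv : y ∉ (powGraph G).neighborSet v := by
    rintro ⟨-, h | h⟩
    · exact hvny h
    · exact hynv h
  have hvNx : v ∈ (powGraph G).neighborSet x := ⟨hxv, Or.inr hvx⟩
  -- twin condition: neighbors of v other than x are neighbors of x
  have hsub : ∀ z, z ∈ (powGraph G).neighborSet v → z ≠ x →
      z ∈ (powGraph G).neighborSet x := by
    intro z hz hzx
    have hzc : z ∈ closedNbhd (powGraph G) v := Set.mem_insert_of_mem _ hz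
    have h1 : (⟨z, hzc⟩ : closedNbhd (powGraph G) v) ∈
        closedNbhd (powLocal G v) ⟨v, self_mem_closedNbhd _ v⟩ := by
      refine Set.mem_insert_of_mem _ ?_
      show (powGraph G).Adj v z
      exact hz
    rw [← htwin] at h1
    rcases h1 with h1 | h1
    · exact absurd (congrArg Subtype.val h1) hzx
    · have : (powGraph G).Adj x z := h1
      exact this
  -- the set inclusion
  have hincl : insert v (insert y ((powGraph G).neighborSet v \ {x})) ⊆
      (powGraph G).neighborSet x := by
    rintro z (rfl | rfl | ⟨hz1, hz2⟩)
    · exact hvNx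
    · exact hyNx
    · exact hsub z hz1 hz2
  have hvnotin : v ∉ insert y ((powGraph G).neighborSet v \ {x}) := by
    rintro (rfl | ⟨h1, -⟩)
    · exact hyv rfl
    · exact (powGraph G).irrefl h1
  have hynotin : y ∉ (powGraph G).neighborSet v \ {x} := fun h => hyNv h.1
  have hxNv : x ∈ (powGraph G).neighborSet v := hadj
  have hcard1 : ((powGraph G).neighborSet v \ {x}).ncard + 1 =
      ((powGraph G).neighborSet v).ncard :=
    Set.ncard_diff_singleton_add_one hxNv (Set.toFinite _)
  have hcard2 : (insert v (insert y ((powGraph G).neighborSet v \ {x}))).ncard =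
      ((powGraph G).neighborSet v \ {x}).ncard + 2 := by
    rw [Set.ncard_insert_of_notMem hvnotin (Set.toFinite _),
      Set.ncard_insert_of_notMem hynotin (Set.toFinite _)]
  have hle : (insert v (insert y ((powGraph G).neighborSet v \ {x}))).ncard ≤
      ((powGraph G).neighborSet x).ncard :=
    Set.ncard_le_ncard hincl (Set.toFinite _)
  omega
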